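/- (MDS property) Let k ≥ 3 be odd. Index the k+2 columns of a codeword as follows: for j ∈ {0,…,k−1}, column j is the vector (a_{i,j})_{i ∈ {0,…,2^{k−1}−1}}; column k is the horizontal parity vector (h_i(a))_i; column k+1 is the butterfly parity vector (b_i(a))_i. Then for any two distinct column indices c_1, c_2 ∈ {0,…,k+1}, if two information arrays a, a′ : {0,…,2^{k−1}−1} × {0,…,k−1} → GF(2) produce codewords that agree on every column other than c_1 and c_2, then a = a′. In other words, the code tolerates the erasure of any two of its k+2 columns. -/

import Mathlib

/-- The `j`-th bit of `i` (`j ≥ 0`). -/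
def bitp (i j : ℕ) : Bool := i.testBit j

/-- The `(j-1)`-th bit of `i`, with the convention that the bit at position `-1` is `0`. -/
def bitm (i j : ℕ) : Bool := if j = 0 then false else i.testBit (j - 1)

/-- `i` is dark in column `j` iff `i(j) = i(j-1)`. -/
def dark (i j : ℕ) : Prop := bitp i j = bitm i j

instance (i j : ℕ) : Decidable (dark i j) := by unfold dark; infer_instance

/-- `ℓ_{i,j} = i ⊕ (2^j - 1)`. -/
def ell (i j : ℕ) : ℕ := i ^^^ (2 ^ j - 1)

/-- The set `B_{i,j}`. -/
def Bset (k i j : ℕ) : Finset (ℕ × ℕ) :=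
  if dark i j then
    ((Finset.range k).filter
        (fun j' : ℕ => ((j : ℤ) - (j' : ℤ)) % (k : ℤ) ≤ ((k / 2 : ℕ) : ℤ))).image
      (fun j' => (i, j'))
  else {(i, j)}

/-- The butterfly support set `B_i = ⋃_{j ∈ [k]} B_{ℓ_{i,j}, j}`. -/
def Bline (k i : ℕ) : Finset (ℕ × ℕ) :=
  (Finset.range k).biUnion (fun j => Bset k (ell i j) j)

/-- Horizontal parity `h_i(a)`. -/
def hpar (k : ℕ) (a : ℕ → ℕ → ZMod 2) (i : ℕ) : ZMod 2 :=
  ∑ j ∈ Finset.range k, a i j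

/-- Butterfly parity `b_i(a)`. -/
def bpar (k : ℕ) (a : ℕ → ℕ → ZMod 2) (i : ℕ) : ZMod 2 :=
  ∑ p ∈ Bline k i, a p.1 p.2

/-- The `c`-th column of the codeword: columns `0,…,k-1` are information columns,
column `k` is the horizontal parity node and column `k+1` is the butterfly parity node. -/
def column (k : ℕ) (a : ℕ → ℕ → ZMod 2) (c : ℕ) : ℕ → ZMod 2 :=
  if c < k then fun i => a i c
  else if c = k then hpar k a
  else bpar k a

-- L1
lemma dark_toggle {u j j1 : ℕ} (hne : j ≠ j1) :
    dark (u ^^^ ((2^j1 - 1) ^^^ (2^j - 1))) j ↔ ¬ dark u j := by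
  unfold dark bitp bitm
  rcases Nat.eq_zero_or_pos j with rfl | hj
  · have hj1 : 0 < j1 := Nat.pos_of_ne_zero (Ne.symm hne)
    simp only [Nat.testBit_xor, Nat.testBit_two_pow_sub_one, if_pos rfl]
    have : decide (0 < j1) = true := by simp [hj1]
    rw [this]
    cases hu : u.testBit 0 <;> simp
  · have h0 : j ≠ 0 := hj.ne'
    simp only [h0, if_neg]
    simp only [Nat.testBit_xor, Nat.testBit_two_pow_sub_one]
    have e1 : decide (j < j) = false := by simp
    have e2 : decide (j - 1 < j) = true := by simp [Nat.sub_lt hj]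
    have e3 : decide (j - 1 < j1) = decide (j < j1) := by
      rcases lt_or_ge j j1 with h | h
      · simp [Nat.lt_of_le_of_lt (Nat.sub_le j 1) h, h]
      · have : ¬ (j - 1 < j1) := by omega
        simp [this, Nat.not_lt_of_ge h]
    rw [e1, e2, e3]
    cases hu : u.testBit j <;> cases hv : u.testBit (j-1) <;> cases hw : decide (j < j1) <;> simp

-- L2
lemma dark_offside {u j j1 j' : ℕ} (h1 : j' ≠ j) (h2 : j' ≠ j1) :
    dark (u ^^^ ((2^j1 - 1) ^^^ (2^j - 1))) j' ↔ dark u j' := by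
  unfold dark bitp bitm
  rcases Nat.eq_zero_or_pos j' with rfl | hj'
  · have hj : 0 < j := Nat.pos_of_ne_zero (Ne.symm h1)
    have hj1 : 0 < j1 := Nat.pos_of_ne_zero (Ne.symm h2)
    simp only [Nat.testBit_xor, Nat.testBit_two_pow_sub_one, if_pos rfl]
    have t1 : decide (0 < j1) = true := by simp [hj1]
    have t2 : decide (0 < j) = true := by simp [hj]
    rw [t1, t2]
    cases hu : u.testBit 0 <;> simp
  · have h0 : j' ≠ 0 := hj'.ne'
    simp only [h0, if_neg]
    simp only [Nat.testBit_xor, Nat.testBit_two_pow_sub_one]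
    have e3 : decide (j' - 1 < j1) = decide (j' < j1) := by
      rcases lt_or_ge j' j1 with h | h
      · simp [Nat.lt_of_le_of_lt (Nat.sub_le j' 1) h, h]
      · have : ¬ (j' - 1 < j1) := by omega
        simp [this, Nat.not_lt_of_ge h]
    have e4 : decide (j' - 1 < j) = decide (j' < j) := by
      rcases lt_or_ge j' j with h | h
      · simp [Nat.lt_of_le_of_lt (Nat.sub_le j' 1) h, h]
      · have : ¬ (j' - 1 < j) := by omega
        simp [this, Nat.not_lt_of_ge h]
    rw [e3, e4]
    cases hu : u.testBit j' <;> cases hv : u.testBit (j'-1) <;> cases hw : decide (j' < j1) <;>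
      cases hx : decide (j' < j) <;> simp

def Wc (k j j' : ℕ) : Prop := ((j : ℤ) - (j' : ℤ)) % (k : ℤ) ≤ ((k / 2 : ℕ) : ℤ)

instance (k j j' : ℕ) : Decidable (Wc k j j') := by unfold Wc; infer_instance


lemma ell_lt {k i j : ℕ} (hi : i < 2^(k-1)) (hj : j < k) : ell i j < 2^(k-1) := by
  apply Nat.xor_lt_two_pow hi
  have h1 : (1:ℕ) ≤ 2^j := Nat.one_le_two_pow
  have h2 : 2^j ≤ 2^(k-1) := Nat.pow_le_pow_right (by norm_num) (by omega)
  omega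

lemma ell_inj {i j j' : ℕ} (h : ell i j = ell i j') : j = j' := by
  unfold ell at h
  have h2 : 2^j - 1 = 2^j' - 1 := by
    have := congrArg (fun x => i ^^^ x) h
    simpa [Nat.xor_xor_cancel_left] using this
  have p1 : (1:ℕ) ≤ 2^j := Nat.one_le_two_pow
  have p2 : (1:ℕ) ≤ 2^j' := Nat.one_le_two_pow
  have h3 : (2:ℕ)^j = 2^j' := by omega
  exact Nat.pow_right_injective (le_refl 2) h3

lemma mem_Bset_fst {k i j : ℕ} {p : ℕ × ℕ} (h : p ∈ Bset k i j) : p.1 = i := by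
  unfold Bset at h
  split_ifs at h
  · simp only [Finset.mem_image] at h
    obtain ⟨j', _, rfl⟩ := h; rfl
  · simp only [Finset.mem_singleton] at h; subst h; rfl

lemma bpar_split (k : ℕ) (d : ℕ → ℕ → ZMod 2) (i : ℕ) :
    bpar k d i = ∑ j ∈ Finset.range k, ∑ p ∈ Bset k (ell i j) j, d p.1 p.2 := by
  unfold bpar Bline
  apply Finset.sum_biUnion
  intro a _ b _ hab
  simp only [Function.onFun]
  rw [Finset.disjoint_left]
  intro p hpa hpb
  exact hab (ell_inj ((mem_Bset_fst hpa).symm.trans (mem_Bset_fst hpb)))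

lemma sum_Bset_dark {k i j : ℕ} (h : dark i j) (d : ℕ → ℕ → ZMod 2) :
    ∑ p ∈ Bset k i j, d p.1 p.2
      = ∑ j' ∈ (Finset.range k).filter (fun j' => Wc k j j'), d i j' := by
  unfold Bset
  rw [if_pos h, Finset.sum_image]
  · rfl
  · intro x _ y _ hxy
    simpa using hxy

lemma sum_Bset_light {k i j : ℕ} (h : ¬ dark i j) (d : ℕ → ℕ → ZMod 2) :
    ∑ p ∈ Bset k i j, d p.1 p.2 = d i j := by
  unfold Bset
  rw [if_neg h, Finset.sum_singleton]

/-- Reduce the window sum to the support set `S`. -/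
lemma window_sum {k j l : ℕ} (d : ℕ → ℕ → ZMod 2) (S : Finset ℕ) (hS : ∀ s ∈ S, s < k)
    (hsupp : ∀ j' < k, j' ∉ S → d l j' = 0) :
    ∑ j' ∈ (Finset.range k).filter (fun j' => Wc k j j'), d l j'
      = ∑ j' ∈ S, if Wc k j j' then d l j' else 0 := by
  rw [← Finset.sum_filter]
  apply (Finset.sum_subset _ _).symm
  · intro x hx
    simp only [Finset.mem_filter] at hx ⊢
    exact ⟨Finset.mem_range.mpr (hS x hx.1), hx.2⟩
  · intro x hx hx'
    simp only [Finset.mem_filter, Finset.mem_range] at hx hx'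
    exact hsupp x hx.1 (fun hxS => hx' ⟨hxS, hx.2⟩)

/-- Exchanging the potential terms at positions `j` and `j1`. -/
lemma phi_swap {k j j1 : ℕ} (w : ℕ → Prop) [DecidablePred w] (hjk : j < k) (hj1k : j1 < k)
    (hne : j ≠ j1) (hwj1 : ¬ w j1) (u : ℕ) :
    (∑ t ∈ Finset.range k, if ¬ dark (u ^^^ ((2^j1 - 1) ^^^ (2^j - 1))) t ∧ w t then 1 else 0)
      + (if ¬ dark u j ∧ w j then (1:ℕ) else 0)
    = (∑ t ∈ Finset.range k, if ¬ dark u t ∧ w t then 1 else 0)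
      + (if ¬ dark (u ^^^ ((2^j1 - 1) ^^^ (2^j - 1))) j ∧ w j then 1 else 0) := by
  set v := u ^^^ ((2^j1 - 1) ^^^ (2^j - 1)) with hv
  have hjmem : j ∈ Finset.range k := Finset.mem_range.mpr hjk
  have hj1mem : j1 ∈ (Finset.range k).erase j :=
    Finset.mem_erase.mpr ⟨Ne.symm hne, Finset.mem_range.mpr hj1k⟩
  have decomp : ∀ m : ℕ,
      (∑ t ∈ Finset.range k, if ¬ dark m t ∧ w t then 1 else 0)
        = (∑ t ∈ ((Finset.range k).erase j).erase j1, if ¬ dark m t ∧ w t then (1:ℕ) else 0)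
          + (if ¬ dark m j1 ∧ w j1 then 1 else 0) + (if ¬ dark m j ∧ w j then 1 else 0) := by
    intro m
    rw [Finset.sum_erase_add _ _ hj1mem, Finset.sum_erase_add _ _ hjmem]
  rw [decomp u, decomp v]
  have hoff : ∀ t ∈ ((Finset.range k).erase j).erase j1,
      (if ¬ dark v t ∧ w t then (1:ℕ) else 0) = (if ¬ dark u t ∧ w t then 1 else 0) := by
    intro t ht
    simp only [Finset.mem_erase] at ht
    simp only [hv, dark_offside ht.2.1 ht.1]
  rw [Finset.sum_congr rfl hoff]
  simp only [hwj1, and_false, if_neg (not_and_of_not_right _ (fun h => h)), ]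
  omega


lemma Wc_refl (k j : ℕ) : Wc k j j := by
  unfold Wc
  simp only [sub_self, Int.zero_emod]
  positivity

lemma emod_neg_eq {a k : ℤ} (h0 : 0 < a) (h : a < k) : (-a) % k = k - a := by
  have h1 : (-a) % k = (-a + k * 1) % k := (Int.add_mul_emod_self_left (-a) k 1).symm
  rw [h1]
  have h2 : -a + k * 1 = k - a := by ring
  rw [h2]
  exact Int.emod_eq_of_lt (by omega) (by omega)

lemma Wc_antisymm {k j j' : ℕ} (hodd : Odd k) (hj : j < k) (hj' : j' < k) (hne : j ≠ j') :
    Wc k j' j ↔ ¬ Wc k j j' := by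
  obtain ⟨m, hm⟩ := hodd
  have hh : ((k/2 : ℕ) : ℤ) = m := by
    have : k / 2 = m := by omega
    exact_mod_cast this
  unfold Wc
  have hjz : (j:ℤ) < (k:ℤ) := by exact_mod_cast hj
  have hj'z : (j':ℤ) < (k:ℤ) := by exact_mod_cast hj'
  have hkz : (k:ℤ) = 2*m + 1 := by exact_mod_cast hm
  have hnez : (j:ℤ) ≠ (j':ℤ) := by exact_mod_cast hne
  rw [hh]
  rcases hnez.lt_or_gt with h | h
  · have e1 : ((j':ℤ) - j) % k = (j':ℤ) - j :=
      Int.emod_eq_of_lt (by omega) (by omega)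
    have e2 : ((j:ℤ) - j') % k = k - ((j':ℤ) - j) := by
      have : (j:ℤ) - j' = -((j':ℤ) - j) := by ring
      rw [this]; exact emod_neg_eq (by omega) (by omega)
    rw [e1, e2]; omega
  · have e1 : ((j:ℤ) - j') % k = (j:ℤ) - j' :=
      Int.emod_eq_of_lt (by omega) (by omega)
    have e2 : ((j':ℤ) - j) % k = k - ((j:ℤ) - j') := by
      have : (j':ℤ) - j = -((j:ℤ) - j') := by ring
      rw [this]; exact emod_neg_eq (by omega) (by omega)
    rw [e1, e2]; omega


lemma engineD (k : ℕ) (hodd : Odd k) (j1 j2 : ℕ) (hj1 : j1 < k) (hj2 : j2 < k)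
    (hne : j1 ≠ j2) (hW21 : Wc k j2 j1) (hW12 : ¬ Wc k j1 j2)
    (d : ℕ → ℕ → ZMod 2)
    (hsupp : ∀ i < 2^(k-1), ∀ j < k, j ≠ j1 → j ≠ j2 → d i j = 0)
    (hy : ∀ i < 2^(k-1), d i j2 = d i j1)
    (hb : ∀ i < 2^(k-1), bpar k d i = 0) :
    ∀ u < 2^(k-1), d u j1 = 0 := by
  classical
  set w : ℕ → Prop := fun j => ¬ (Wc k j j1 ↔ Wc k j j2) ∧ j ≠ j1 with hw
  set phi : ℕ → ℕ := fun u => ∑ t ∈ Finset.range k, if ¬ dark u t ∧ w t then 1 else 0 with hphi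
  set M : ℕ → ℕ := fun u => 2 * phi u + (if dark u j2 then 1 else 0) with hM
  have hwj1 : ¬ w j1 := by simp [hw]
  have hwj2 : ¬ w j2 := by
    simp only [hw, not_and, not_not]
    intro h; exact absurd (iff_of_true hW21 (Wc_refl k j2)) h
  have ite_le : ∀ (m t : ℕ), (if dark m t then (1:ℕ) else 0) ≤ 1 := by
    intro m t; split_ifs <;> omega
  suffices H : ∀ N, ∀ u, u < 2^(k-1) → M u ≤ N → d u j1 = 0 by
    intro u hu; exact H (M u) u hu le_rfl
  intro N
  induction N using Nat.strong_induction_on with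
  | _ N IH =>
  intro u hu hMu
  have hi : ell u j1 < 2^(k-1) := ell_lt hu hj1
  set i := u ^^^ (2^j1 - 1) with hidef
  have hi' : i < 2^(k-1) := hi
  have heq := hb i hi'
  rw [bpar_split] at heq
  have hSlt : ∀ s ∈ ({j1, j2} : Finset ℕ), s < k := by
    intro s hs
    rcases Finset.mem_insert.mp hs with rfl | hs
    · exact hj1
    · rw [Finset.mem_singleton] at hs; subst hs; exact hj2
  have hgen : ∀ j ∈ Finset.range k,
      (∑ p ∈ Bset k (ell i j) j, d p.1 p.2)
        = if dark (ell i j) j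
          then ((if Wc k j j1 then d (ell i j) j1 else 0) + (if Wc k j j2 then d (ell i j) j2 else 0))
          else d (ell i j) j := by
    intro j hj
    have hjk := Finset.mem_range.mp hj
    by_cases hd : dark (ell i j) j
    · rw [if_pos hd, sum_Bset_dark hd,
        window_sum d {j1, j2} hSlt (fun j' hj'k hj'S => by
          simp only [Finset.mem_insert, Finset.mem_singleton, not_or] at hj'S
          exact hsupp _ (ell_lt hi' hjk) j' hj'k hj'S.1 hj'S.2),
        Finset.sum_insert (by simpa using hne), Finset.sum_singleton]
    · rw [if_neg hd, sum_Bset_light hd]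
  rw [Finset.sum_congr rfl hgen] at heq
  have hpivot : i ∈ Finset.range k → True := fun _ => trivial
  have hterm : ∀ j ∈ Finset.range k, j ≠ j1 →
      (if dark (ell i j) j
          then ((if Wc k j j1 then d (ell i j) j1 else 0) + (if Wc k j j2 then d (ell i j) j2 else 0))
          else d (ell i j) j) = 0 := by
    intro j hjmem hjne
    have hjk := Finset.mem_range.mp hjmem
    have hell : ell i j = u ^^^ ((2^j1 - 1) ^^^ (2^j - 1)) := by
      unfold ell; rw [hidef, Nat.xor_assoc]
    have hvlt : u ^^^ ((2^j1 - 1) ^^^ (2^j - 1)) < 2^(k-1) := by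
      rw [← hell]; exact ell_lt hi' hjk
    set v := u ^^^ ((2^j1 - 1) ^^^ (2^j - 1)) with hvdef
    have hT : dark v j ↔ ¬ dark u j := dark_toggle hjne
    have hswap := phi_swap w hjk hj1 hjne hwj1 u
    rw [hell]
    by_cases hd : dark v j
    · rw [if_pos hd]
      have hlight : ¬ dark u j := hT.mp hd
      by_cases h1 : Wc k j j1 <;> by_cases h2 : Wc k j j2
      · rw [if_pos h1, if_pos h2, hy v hvlt, CharTwo.add_self_eq_zero]
      · -- only j1 window: w j holds
        rw [if_pos h1, if_neg h2, add_zero]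
        have hwj : w j := ⟨by tauto, hjne⟩
        have hphiv : phi v + 1 = phi u := by
          have e1 : (if ¬ dark u j ∧ w j then (1:ℕ) else 0) = 1 := if_pos ⟨hlight, hwj⟩
          have e2 : (if ¬ dark v j ∧ w j then (1:ℕ) else 0) = 0 := by
            rw [if_neg]; rw [not_and]; intro h; exact absurd hd h
          simp only [hphi]
          rw [e1, e2, add_zero] at hswap
          exact hswap
        have hMv : M v < N := by
          have h2' : M v = 2 * phi v + (if dark v j2 then 1 else 0) := rfl
          have h3' : M u = 2 * phi u + (if dark u j2 then 1 else 0) := rfl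
          have b1 := ite_le v j2; have b2 := ite_le u j2
          omega
        exact IH (M v) hMv v hvlt le_rfl
      · rw [if_neg h1, if_pos h2, zero_add, hy v hvlt]
        have hwj : w j := ⟨by tauto, hjne⟩
        have hphiv : phi v + 1 = phi u := by
          have e1 : (if ¬ dark u j ∧ w j then (1:ℕ) else 0) = 1 := if_pos ⟨hlight, hwj⟩
          have e2 : (if ¬ dark v j ∧ w j then (1:ℕ) else 0) = 0 := by
            rw [if_neg]; rw [not_and]; intro h; exact absurd hd h
          simp only [hphi]
          rw [e1, e2, add_zero] at hswap
          exact hswap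
        have hMv : M v < N := by
          have h2' : M v = 2 * phi v + (if dark v j2 then 1 else 0) := rfl
          have h3' : M u = 2 * phi u + (if dark u j2 then 1 else 0) := rfl
          have b1 := ite_le v j2; have b2 := ite_le u j2
          omega
        exact IH (M v) hMv v hvlt le_rfl
      · rw [if_neg h1, if_neg h2, add_zero]
    · rw [if_neg hd]
      by_cases hj2' : j = j2
      · subst hj2'
        rw [hy v hvlt]
        have hdu : dark u j := by
          by_contra hcon
          exact hd (hT.mpr hcon)
        have hphiv : phi v = phi u := by
          have e1 : (if ¬ dark u j ∧ w j then (1:ℕ) else 0) = 0 := by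
            rw [if_neg]; rw [not_and]; intro _; exact hwj2
          have e2 : (if ¬ dark v j ∧ w j then (1:ℕ) else 0) = 0 := by
            rw [if_neg]; rw [not_and]; intro _; exact hwj2
          simp only [hphi]
          rw [e1, e2, add_zero, add_zero] at hswap
          exact hswap
        have hMv : M v < N := by
          have h2' : M v = 2 * phi v + (if dark v j then 1 else 0) := rfl
          have h3' : M u = 2 * phi u + (if dark u j then 1 else 0) := rfl
          rw [if_neg hd] at h2'
          rw [if_pos hdu] at h3'
          omega
        exact IH (M v) hMv v hvlt le_rfl
      · exact hsupp v hvlt j hjk hjne hj2'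
  rw [Finset.sum_eq_single_of_mem j1 (Finset.mem_range.mpr hj1) hterm] at heq
  have hellj1 : ell i j1 = u := by
    unfold ell; rw [hidef]; exact Nat.xor_xor_cancel_right _ _
  rw [hellj1] at heq
  by_cases hd : dark u j1
  · rw [if_pos hd, if_pos (Wc_refl k j1), if_neg hW12, add_zero] at heq
    exact heq
  · rw [if_neg hd] at heq
    exact heq


lemma engineC (k : ℕ) (j1 : ℕ) (hj1 : j1 < k)
    (d : ℕ → ℕ → ZMod 2)
    (hsupp : ∀ i < 2^(k-1), ∀ j < k, j ≠ j1 → d i j = 0)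
    (hb : ∀ i < 2^(k-1), bpar k d i = 0) :
    ∀ u < 2^(k-1), d u j1 = 0 := by
  classical
  set w : ℕ → Prop := fun j => Wc k j j1 ∧ j ≠ j1 with hw
  set phi : ℕ → ℕ := fun u => ∑ t ∈ Finset.range k, if ¬ dark u t ∧ w t then 1 else 0 with hphi
  have hwj1 : ¬ w j1 := by simp [hw]
  suffices H : ∀ N, ∀ u, u < 2^(k-1) → phi u ≤ N → d u j1 = 0 by
    intro u hu; exact H (phi u) u hu le_rfl
  intro N
  induction N using Nat.strong_induction_on with
  | _ N IH =>
  intro u hu hMu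
  have hi : ell u j1 < 2^(k-1) := ell_lt hu hj1
  set i := u ^^^ (2^j1 - 1) with hidef
  have hi' : i < 2^(k-1) := hi
  have heq := hb i hi'
  rw [bpar_split] at heq
  have hSlt : ∀ s ∈ ({j1} : Finset ℕ), s < k := by
    intro s hs; rw [Finset.mem_singleton] at hs; subst hs; exact hj1
  have hgen : ∀ j ∈ Finset.range k,
      (∑ p ∈ Bset k (ell i j) j, d p.1 p.2)
        = if dark (ell i j) j
          then (if Wc k j j1 then d (ell i j) j1 else 0)
          else d (ell i j) j := by
    intro j hj
    have hjk := Finset.mem_range.mp hj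
    by_cases hd : dark (ell i j) j
    · rw [if_pos hd, sum_Bset_dark hd,
        window_sum d {j1} hSlt (fun j' hj'k hj'S => by
          rw [Finset.mem_singleton] at hj'S
          exact hsupp _ (ell_lt hi' hjk) j' hj'k hj'S),
        Finset.sum_singleton]
    · rw [if_neg hd, sum_Bset_light hd]
  rw [Finset.sum_congr rfl hgen] at heq
  have hterm : ∀ j ∈ Finset.range k, j ≠ j1 →
      (if dark (ell i j) j
          then (if Wc k j j1 then d (ell i j) j1 else 0)
          else d (ell i j) j) = 0 := by
    intro j hjmem hjne
    have hjk := Finset.mem_range.mp hjmem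
    have hell : ell i j = u ^^^ ((2^j1 - 1) ^^^ (2^j - 1)) := by
      unfold ell; rw [hidef, Nat.xor_assoc]
    have hvlt : u ^^^ ((2^j1 - 1) ^^^ (2^j - 1)) < 2^(k-1) := by
      rw [← hell]; exact ell_lt hi' hjk
    set v := u ^^^ ((2^j1 - 1) ^^^ (2^j - 1)) with hvdef
    have hT : dark v j ↔ ¬ dark u j := dark_toggle hjne
    have hswap := phi_swap w hjk hj1 hjne hwj1 u
    rw [hell]
    by_cases hd : dark v j
    · rw [if_pos hd]
      by_cases h1 : Wc k j j1
      · rw [if_pos h1]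
        have hlight : ¬ dark u j := hT.mp hd
        have hwj : w j := ⟨h1, hjne⟩
        have hphiv : phi v + 1 = phi u := by
          have e1 : (if ¬ dark u j ∧ w j then (1:ℕ) else 0) = 1 := if_pos ⟨hlight, hwj⟩
          have e2 : (if ¬ dark v j ∧ w j then (1:ℕ) else 0) = 0 := by
            rw [if_neg]; rw [not_and]; intro h; exact absurd hd h
          simp only [hphi]
          rw [e1, e2, add_zero] at hswap
          exact hswap
        exact IH (phi v) (by omega) v hvlt le_rfl
      · rw [if_neg h1]
    · rw [if_neg hd]
      exact hsupp v hvlt j hjk hjne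
  rw [Finset.sum_eq_single_of_mem j1 (Finset.mem_range.mpr hj1) hterm] at heq
  have hellj1 : ell i j1 = u := by
    unfold ell; rw [hidef]; exact Nat.xor_xor_cancel_right _ _
  rw [hellj1] at heq
  by_cases hd : dark u j1
  · rw [if_pos hd, if_pos (Wc_refl k j1)] at heq
    exact heq
  · rw [if_neg hd] at heq
    exact heq


/-- Recovery of a single erased column from the horizontal parity. -/
lemma recover_hpar (k e : ℕ) (he : e < k) (d : ℕ → ℕ → ZMod 2)
    (hsupp : ∀ i < 2^(k-1), ∀ j < k, j ≠ e → d i j = 0)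
    (hh : ∀ i < 2^(k-1), ∑ j ∈ Finset.range k, d i j = 0) :
    ∀ i < 2^(k-1), ∀ j < k, d i j = 0 := by
  intro i hi j hj
  by_cases hje : j = e
  · subst hje
    have := hh i hi
    rwa [Finset.sum_eq_single_of_mem j (Finset.mem_range.mpr hj)
      (fun b hb hbne => hsupp i hi b (Finset.mem_range.mp hb) hbne)] at this
  · exact hsupp i hi j hj hje

/-- Recovery of a single erased column from the butterfly parity. -/
lemma recover_bpar (k e : ℕ) (he : e < k) (d : ℕ → ℕ → ZMod 2)
    (hsupp : ∀ i < 2^(k-1), ∀ j < k, j ≠ e → d i j = 0)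
    (hb : ∀ i < 2^(k-1), bpar k d i = 0) :
    ∀ i < 2^(k-1), ∀ j < k, d i j = 0 := by
  intro i hi j hj
  by_cases hje : j = e
  · subst hje
    exact engineC k j hj d hsupp hb i hi
  · exact hsupp i hi j hj hje

/-- Recovery of two erased columns from both parities. -/
lemma recover_two (k : ℕ) (hodd : Odd k) (e₁ e₂ : ℕ) (he₁ : e₁ < k) (he₂ : e₂ < k)
    (hne : e₁ ≠ e₂) (d : ℕ → ℕ → ZMod 2)
    (hsupp : ∀ i < 2^(k-1), ∀ j < k, j ≠ e₁ → j ≠ e₂ → d i j = 0)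
    (hh : ∀ i < 2^(k-1), ∑ j ∈ Finset.range k, d i j = 0)
    (hb : ∀ i < 2^(k-1), bpar k d i = 0) :
    ∀ i < 2^(k-1), ∀ j < k, d i j = 0 := by
  have hsum2 : ∀ i < 2^(k-1), d i e₁ + d i e₂ = 0 := by
    intro i hi
    have e : d i e₁ + d i e₂ = ∑ j ∈ Finset.range k, d i j := by
      rw [← Finset.sum_pair hne]
      apply Finset.sum_subset
      · intro x hx
        rcases Finset.mem_insert.mp hx with rfl | hx
        · exact Finset.mem_range.mpr he₁
        · rw [Finset.mem_singleton] at hx; subst hx; exact Finset.mem_range.mpr he₂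
      · intro x hx hx'
        simp only [Finset.mem_insert, Finset.mem_singleton, not_or] at hx'
        exact hsupp i hi x (Finset.mem_range.mp hx) hx'.1 hx'.2
    rw [e]; exact hh i hi
  have key : ∀ i < 2^(k-1), d i e₁ = 0 ∧ d i e₂ = 0 := by
    by_cases hw : Wc k e₂ e₁
    · have hw' : ¬ Wc k e₁ e₂ := (Wc_antisymm hodd he₁ he₂ hne).mp hw
      have hy : ∀ i < 2^(k-1), d i e₂ = d i e₁ := by
        intro i hi
        have h := hsum2 i hi
        rw [eq_neg_of_add_eq_zero_right h, CharTwo.neg_eq]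
      have h1 := engineD k hodd e₁ e₂ he₁ he₂ hne hw hw' d hsupp hy hb
      intro i hi
      exact ⟨h1 i hi, by rw [hy i hi]; exact h1 i hi⟩
    · have hw' : Wc k e₁ e₂ := (Wc_antisymm hodd he₂ he₁ (Ne.symm hne)).mpr hw
      have hy : ∀ i < 2^(k-1), d i e₁ = d i e₂ := by
        intro i hi
        have h : d i e₂ + d i e₁ = 0 := by rw [add_comm]; exact hsum2 i hi
        rw [eq_neg_of_add_eq_zero_right h, CharTwo.neg_eq]
      have h1 := engineD k hodd e₂ e₁ he₂ he₁ (Ne.symm hne) hw' hw d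
        (fun i hi j hj h2 h1' => hsupp i hi j hj h1' h2) hy hb
      intro i hi
      exact ⟨by rw [hy i hi]; exact h1 i hi, h1 i hi⟩
  intro i hi j hj
  by_cases h1 : j = e₁
  · subst h1; exact (key i hi).1
  by_cases h2 : j = e₂
  · subst h2; exact (key i hi).2
  exact hsupp i hi j hj h1 h2

lemma column_self (k : ℕ) (a : ℕ → ℕ → ZMod 2) : column k a k = hpar k a := by
  unfold column; rw [if_neg (lt_irrefl k), if_pos rfl]

lemma column_succ (k : ℕ) (a : ℕ → ℕ → ZMod 2) : column k a (k+1) = bpar k a := by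
  unfold column
  rw [if_neg (by omega : ¬ (k+1 < k)), if_neg (by omega : ¬ (k+1 = k))]


/-- MDS property: the code tolerates the erasure of any two of its `k+2` columns. -/
theorem mds_property
    (k : ℕ) (hk : 3 ≤ k) (hodd : Odd k)
    (c₁ c₂ : ℕ) (hc₁ : c₁ < k + 2) (hc₂ : c₂ < k + 2) (hne : c₁ ≠ c₂)
    (a a' : ℕ → ℕ → ZMod 2)
    (hagree : ∀ c < k + 2, c ≠ c₁ → c ≠ c₂ →
      ∀ i < 2 ^ (k - 1), column k a c i = column k a' c i) :
    ∀ i < 2 ^ (k - 1), ∀ j < k, a i j = a' i j := by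
  classical
  set d : ℕ → ℕ → ZMod 2 := fun i j => a i j - a' i j with hd
  suffices hz : ∀ i < 2^(k-1), ∀ j < k, d i j = 0 by
    intro i hi j hj
    exact sub_eq_zero.mp (hz i hi j hj)
  have hinfo : ∀ c < k, c ≠ c₁ → c ≠ c₂ → ∀ i < 2^(k-1), d i c = 0 := by
    intro c hc h1 h2 i hi
    have h := hagree c (by omega) h1 h2 i hi
    simp only [column, if_pos hc] at h
    simp only [hd]
    rw [h, sub_self]
  have hhpar : k ≠ c₁ → k ≠ c₂ → ∀ i < 2^(k-1), ∑ j ∈ Finset.range k, d i j = 0 := by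
    intro h1 h2 i hi
    have h := hagree k (by omega) h1 h2 i hi
    rw [column_self, column_self] at h
    unfold hpar at h
    simp only [hd]
    rw [Finset.sum_sub_distrib, h, sub_self]
  have hbpar : (k+1) ≠ c₁ → (k+1) ≠ c₂ → ∀ i < 2^(k-1), bpar k d i = 0 := by
    intro h1 h2 i hi
    have h := hagree (k+1) (by omega) h1 h2 i hi
    rw [column_succ, column_succ] at h
    unfold bpar at h ⊢
    simp only [hd]
    rw [Finset.sum_sub_distrib, h, sub_self]
  by_cases hc1k : c₁ < k <;> by_cases hc2k : c₂ < k
  · -- both information columns erased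
    exact recover_two k hodd c₁ c₂ hc1k hc2k hne d
      (fun i hi j hj h1 h2 => hinfo j hj h1 h2 i hi)
      (hhpar (by omega) (by omega)) (hbpar (by omega) (by omega))
  · -- c₁ info, c₂ parity
    have hsupp : ∀ i < 2^(k-1), ∀ j < k, j ≠ c₁ → d i j = 0 :=
      fun i hi j hj h1 => hinfo j hj h1 (by omega) i hi
    by_cases hc2 : c₂ = k
    · exact recover_bpar k c₁ hc1k d hsupp (hbpar (by omega) (by omega))
    · have : c₂ = k + 1 := by omega
      exact recover_hpar k c₁ hc1k d hsupp (hhpar (by omega) (by omega))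
  · -- c₂ info, c₁ parity
    have hsupp : ∀ i < 2^(k-1), ∀ j < k, j ≠ c₂ → d i j = 0 :=
      fun i hi j hj h2 => hinfo j hj (by omega) h2 i hi
    by_cases hc1 : c₁ = k
    · exact recover_bpar k c₂ hc2k d hsupp (hbpar (by omega) (by omega))
    · have : c₁ = k + 1 := by omega
      exact recover_hpar k c₂ hc2k d hsupp (hhpar (by omega) (by omega))
  · -- both parities erased
    intro i hi j hj
    exact hinfo j hj (by omega) (by omega) i hi
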